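/- (Path coupling mixing bound.) Let Φ be an integer-valued metric on Ω×Ω taking values in {0,…,D} such that any pair σ,η ∈ Ω at distance Φ(σ,η) is connected by a path τ₀ = σ, τ₁, …, τ_k = η of adjacent states with Φ(σ,η) = Σᵢ Φ(τᵢ, τᵢ₊₁). Suppose there is β < 1 and a coupling (σ,η) ↦ (σ',η') of one step of an ergodic Markov chain on Ω such that for all adjacent pairs, E[Φ(σ',η')] ≤ β·Φ(σ,η). Then the mixing time satisfies τ(ε) ≤ log(D ε⁻¹)/(1 − β). -/

import Mathlib

open Finset

/-- Sum of `Φ` over consecutive pairs along a path. -/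
def pathSumN {α : Type*} (wt : α → α → ℕ) : List α → ℕ
  | [] => 0
  | [_] => 0
  | a :: b :: l => wt a b + pathSumN wt (b :: l)

section helpers
variable {Ω : Type*} [Fintype Ω] [DecidableEq Ω]

lemma marg_zero1 (w : Ω → ℝ) (μ : Ω × Ω → ℝ) (hμ0 : ∀ p, 0 ≤ μ p)
    (h : ∀ y, ∑ x, μ (x, y) = w y) {y : Ω} (hy : w y = 0) (x : Ω) : μ (x, y) = 0 := by
  have h0 : ∑ x, μ (x, y) = 0 := (h y).trans hy
  exact (Finset.sum_eq_zero_iff_of_nonneg (fun i _ => hμ0 (i, y))).mp h0 x (mem_univ x)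

lemma marg_zero2 (w : Ω → ℝ) (ν : Ω × Ω → ℝ) (hν0 : ∀ p, 0 ≤ ν p)
    (h : ∀ y, ∑ z, ν (y, z) = w y) {y : Ω} (hy : w y = 0) (z : Ω) : ν (y, z) = 0 := by
  have h0 : ∑ z, ν (y, z) = 0 := (h y).trans hy
  exact (Finset.sum_eq_zero_iff_of_nonneg (fun i _ => hν0 (y, i))).mp h0 z (mem_univ z)

lemma glue (w a b : Ω → ℝ) (μ ν : Ω × Ω → ℝ) (Φ : Ω → Ω → ℕ)
    (hμ0 : ∀ p, 0 ≤ μ p) (hν0 : ∀ p, 0 ≤ ν p)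
    (hμ1 : ∀ x, ∑ y, μ (x, y) = a x) (hμ2 : ∀ y, ∑ x, μ (x, y) = w y)
    (hν1 : ∀ y, ∑ z, ν (y, z) = w y) (hν2 : ∀ z, ∑ y, ν (y, z) = b z)
    (htri : ∀ x y z, Φ x z ≤ Φ x y + Φ y z) :
    ∃ lam : Ω × Ω → ℝ, (∀ p, 0 ≤ lam p) ∧ (∀ x, ∑ z, lam (x, z) = a x) ∧
      (∀ z, ∑ x, lam (x, z) = b z) ∧
      ∑ p : Ω × Ω, lam p * (Φ p.1 p.2 : ℝ) ≤
        ∑ p : Ω × Ω, μ p * (Φ p.1 p.2 : ℝ) + ∑ p : Ω × Ω, ν p * (Φ p.1 p.2 : ℝ) := by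
  set t : Ω → Ω → Ω → ℝ := fun x y z => if w y = 0 then 0 else μ (x, y) * ν (y, z) / w y with ht
  have hw0 : ∀ y, 0 ≤ w y := fun y => (hμ2 y) ▸ Finset.sum_nonneg (fun i _ => hμ0 (i, y))
  have ht0 : ∀ x y z, 0 ≤ t x y z := by
    intro x y z
    by_cases hy : w y = 0
    · simp [ht, hy]
    · simp only [ht, if_neg hy]
      exact div_nonneg (mul_nonneg (hμ0 _) (hν0 _)) (hw0 y)
  have key1 : ∀ x y, ∑ z, t x y z = μ (x, y) := by
    intro x y
    by_cases hy : w y = 0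
    · simp [ht, hy, marg_zero1 w μ hμ0 hμ2 hy]
    · simp only [ht, if_neg hy]
      rw [← Finset.sum_div, ← Finset.mul_sum, hν1, mul_div_assoc, div_self hy, mul_one]
  have key2 : ∀ y z, ∑ x, t x y z = ν (y, z) := by
    intro y z
    by_cases hy : w y = 0
    · simp [ht, hy, marg_zero2 w ν hν0 hν1 hy]
    · simp only [ht, if_neg hy]
      rw [← Finset.sum_div, ← Finset.sum_mul, hμ2, mul_comm, mul_div_assoc, div_self hy, mul_one]
  refine ⟨fun p => ∑ y, t p.1 y p.2, fun p => Finset.sum_nonneg fun y _ => ht0 _ _ _, ?_, ?_, ?_⟩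
  · intro x
    rw [← hμ1 x, Finset.sum_comm]
    exact Finset.sum_congr rfl fun y _ => key1 x y
  · intro z
    rw [← hν2 z, Finset.sum_comm]
    exact Finset.sum_congr rfl fun y _ => key2 y z
  · rw [Fintype.sum_prod_type]
    calc ∑ x, ∑ z, (∑ y, t x y z) * (Φ x z : ℝ)
        ≤ ∑ x, ∑ z, ∑ y, t x y z * ((Φ x y : ℝ) + (Φ y z : ℝ)) := by
          refine Finset.sum_le_sum fun x _ => Finset.sum_le_sum fun z _ => ?_
          rw [Finset.sum_mul]
          refine Finset.sum_le_sum fun y _ => ?_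
          refine mul_le_mul_of_nonneg_left ?_ (ht0 x y z)
          push_cast
          exact_mod_cast Nat.cast_le.mpr (htri x y z)
      _ = (∑ x, ∑ y, ∑ z, t x y z * (Φ x y : ℝ)) + (∑ y, ∑ z, ∑ x, t x y z * (Φ y z : ℝ)) := by
          simp only [mul_add, Finset.sum_add_distrib]
          congr 1
          · exact Finset.sum_congr rfl fun x _ => Finset.sum_comm
          · calc ∑ x, ∑ z, ∑ y, t x y z * (Φ y z : ℝ)
                = ∑ x, ∑ y, ∑ z, t x y z * (Φ y z : ℝ) :=
                  Finset.sum_congr rfl fun x _ => Finset.sum_comm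
              _ = ∑ y, ∑ x, ∑ z, t x y z * (Φ y z : ℝ) := Finset.sum_comm
              _ = ∑ y, ∑ z, ∑ x, t x y z * (Φ y z : ℝ) :=
                  Finset.sum_congr rfl fun y _ => Finset.sum_comm
      _ = ∑ p : Ω × Ω, μ p * (Φ p.1 p.2 : ℝ) + ∑ p : Ω × Ω, ν p * (Φ p.1 p.2 : ℝ) := by
          rw [Fintype.sum_prod_type, Fintype.sum_prod_type]
          congr 1
          · refine Finset.sum_congr rfl fun x _ => Finset.sum_congr rfl fun y _ => ?_
            rw [← Finset.sum_mul, key1]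
          · refine Finset.sum_congr rfl fun y _ => Finset.sum_congr rfl fun z _ => ?_
            rw [← Finset.sum_mul, key2]

lemma pathCouple (Adj : Ω → Ω → Prop) (P : Matrix Ω Ω ℝ) (Φ : Ω → Ω → ℕ) (β : ℝ)
    (htri : ∀ x y z, Φ x z ≤ Φ x y + Φ y z) (hdiag : ∀ x, Φ x x = 0)
    (C : Ω → Ω → Ω × Ω → ℝ) (hC0 : ∀ σ η p, 0 ≤ C σ η p)
    (hCm1 : ∀ σ η σ', ∑ η', C σ η (σ', η') = P σ σ')
    (hCm2 : ∀ σ η η', ∑ σ', C σ η (σ', η') = P η η')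
    (hCdiag : ∀ σ : Ω, ∀ p : Ω × Ω, p.1 ≠ p.2 → C σ σ p = 0)
    (hcontr : ∀ σ η, Adj σ η →
      ∑ p : Ω × Ω, C σ η p * (Φ p.1 p.2 : ℝ) ≤ β * (Φ σ η : ℝ)) :
    ∀ l : List Ω, l.Chain' Adj → ∀ σ η : Ω, l.head? = some σ → l.getLast? = some η →
      ∃ K : Ω × Ω → ℝ, (∀ p, 0 ≤ K p) ∧ (∀ x, ∑ y, K (x, y) = P σ x) ∧
        (∀ y, ∑ x, K (x, y) = P η y) ∧
        ∑ p : Ω × Ω, K p * (Φ p.1 p.2 : ℝ) ≤ β * (pathSumN Φ l : ℝ) := by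
  intro l
  induction l with
  | nil => intro _ σ η h; simp at h
  | cons a l ih =>
    cases l with
    | nil =>
      intro _ σ η hhd hlast
      simp only [List.head?_cons, Option.some.injEq] at hhd
      simp only [List.getLast?_singleton, Option.some.injEq] at hlast
      subst hhd; subst hlast
      refine ⟨C a a, hC0 a a, fun x => hCm1 a a x, fun y => hCm2 a a y, ?_⟩
      have : ∑ p : Ω × Ω, C a a p * (Φ p.1 p.2 : ℝ) = 0 := by
        refine Finset.sum_eq_zero fun p _ => ?_
        by_cases hp : p.1 = p.2
        · rw [hp, hdiag]; simp
        · rw [hCdiag a p hp, zero_mul]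
      rw [this]
      simp [pathSumN]
    | cons b l' =>
      intro hch σ η hhd hlast
      simp only [List.head?_cons, Option.some.injEq] at hhd
      subst hhd
      rw [List.Chain', List.isChain_cons_cons] at hch
      have hlast' : (b :: l').getLast? = some η := by
        rwa [List.getLast?_cons_cons] at hlast
      obtain ⟨K', hK'0, hK'1, hK'2, hK'c⟩ := ih hch.2 b η rfl hlast'
      obtain ⟨lam, h0, h1, h2, hc⟩ := glue (P b) (P a) (P η)
        (fun p => C a b p) K' Φ (hC0 a b) hK'0
        (fun x => hCm1 a b x) (fun y => hCm2 a b y) hK'1 hK'2 htri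
      refine ⟨lam, h0, h1, h2, ?_⟩
      refine hc.trans ?_
      have h1' := hcontr a b hch.1
      have : (pathSumN Φ (a :: b :: l') : ℝ) = (Φ a b : ℝ) + (pathSumN Φ (b :: l') : ℝ) := by
        simp [pathSumN]
      rw [this, mul_add]
      exact add_le_add h1' hK'c
end helpers

/-- Path coupling mixing bound: if `Φ` is an integer-valued metric with values in
`{0,…,D}` along which every pair decomposes into a path of adjacent states, and there is
a coupling of one step of the chain contracting `Φ` by a factor `β < 1` on adjacent
pairs, then the total variation distance from stationarity is at most `ε` after
`log(D ε⁻¹)/(1-β)` steps. -/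
theorem stmt8 {Ω : Type*} [Fintype Ω] [DecidableEq Ω] [Nonempty Ω]
    (Adj : Ω → Ω → Prop) (P : Matrix Ω Ω ℝ)
    (hP0 : ∀ σ η, 0 ≤ P σ η) (hP1 : ∀ σ, ∑ η, P σ η = 1)
    (hirr : ∀ σ η, ∃ t : ℕ, 0 < (P ^ t) σ η)
    (haper : ∀ σ : Ω, ∀ d : ℕ, (∀ t : ℕ, 1 ≤ t → 0 < (P ^ t) σ σ → d ∣ t) → d = 1)
    (π : Ω → ℝ) (hπ0 : ∀ σ, 0 ≤ π σ) (hπ1 : ∑ σ, π σ = 1)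
    (hstat : ∀ η, ∑ σ, π σ * P σ η = π η)
    (Φ : Ω → Ω → ℕ) (D : ℕ) (hD : ∀ σ η, Φ σ η ≤ D)
    (hsym : ∀ σ η, Φ σ η = Φ η σ)
    (htri : ∀ σ ζ η, Φ σ η ≤ Φ σ ζ + Φ ζ η)
    (hzero : ∀ σ η, Φ σ η = 0 ↔ σ = η)
    (hpath : ∀ σ η : Ω, ∃ l : List Ω, l.Chain' Adj ∧ l.head? = some σ ∧
      l.getLast? = some η ∧ Φ σ η = pathSumN Φ l)
    (C : Ω → Ω → Ω × Ω → ℝ)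
    (hC0 : ∀ σ η p, 0 ≤ C σ η p)
    (hCm1 : ∀ σ η σ', ∑ η', C σ η (σ', η') = P σ σ')
    (hCm2 : ∀ σ η η', ∑ σ', C σ η (σ', η') = P η η')
    (hCdiag : ∀ σ : Ω, ∀ p : Ω × Ω, p.1 ≠ p.2 → C σ σ p = 0)
    (β : ℝ) (hβ : β < 1)
    (hcontr : ∀ σ η, Adj σ η →
      ∑ p : Ω × Ω, C σ η p * (Φ p.1 p.2 : ℝ) ≤ β * (Φ σ η : ℝ)) :
    ∀ ε : ℝ, 0 < ε → ∀ σ : Ω, ∀ t : ℕ,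
      Real.log ((D : ℝ) * ε⁻¹) / (1 - β) ≤ (t : ℝ) →
      (1 / 2) * ∑ η, |(P ^ t) σ η - π η| ≤ ε := by
  intro ε hε σ0 t ht
  set β' : ℝ := max β 0 with hβ'def
  have hβ'0 : (0:ℝ) ≤ β' := le_max_right _ _
  have hβ'1 : β' < 1 := max_lt hβ zero_lt_one
  have hdiag : ∀ x : Ω, Φ x x = 0 := fun x => (hzero x x).mpr rfl
  have hcontr' : ∀ σ η, Adj σ η →
      ∑ p : Ω × Ω, C σ η p * (Φ p.1 p.2 : ℝ) ≤ β' * (Φ σ η : ℝ) := by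
    intro σ η h
    exact (hcontr σ η h).trans
      (mul_le_mul_of_nonneg_right (le_max_left β 0) (Nat.cast_nonneg _))
  -- one-step coupling for all pairs
  have onestep : ∀ σ η : Ω, ∃ K : Ω × Ω → ℝ, (∀ p, 0 ≤ K p) ∧
      (∀ x, ∑ y, K (x, y) = P σ x) ∧ (∀ y, ∑ x, K (x, y) = P η y) ∧
      ∑ p : Ω × Ω, K p * (Φ p.1 p.2 : ℝ) ≤ β' * (Φ σ η : ℝ) := by
    intro σ η
    obtain ⟨l, hch, hh, hl, heq⟩ := hpath σ η
    obtain ⟨K, h0, h1, h2, hc⟩ := pathCouple Adj P Φ β' htri hdiag C hC0 hCm1 hCm2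
      hCdiag hcontr' l hch σ η hh hl
    refine ⟨K, h0, h1, h2, ?_⟩
    rw [heq]
    exact_mod_cast hc
  choose K hK0 hK1 hK2 hKc using onestep
  -- per-pair t-step bound
  have key : ∀ η : Ω, (1 / 2) * ∑ x, |(P ^ t) σ0 x - (P ^ t) η x| ≤
      β' ^ t * (Φ σ0 η : ℝ) := by
    intro η
    set Dt : ℕ → Ω × Ω → ℝ := fun s => Nat.rec
      (fun p => if p = (σ0, η) then 1 else 0)
      (fun _ prev p' => ∑ p : Ω × Ω, prev p * K p.1 p.2 p') s with hDtdef
    have hDtsucc : ∀ s p', Dt (s + 1) p' = ∑ p : Ω × Ω, Dt s p * K p.1 p.2 p' :=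
      fun s p' => rfl
    have hDtzero : ∀ p, Dt 0 p = if p = (σ0, η) then 1 else 0 := fun p => rfl
    have hDt0 : ∀ s p, 0 ≤ Dt s p := by
      intro s
      induction s with
      | zero => intro p; rw [hDtzero]; split <;> norm_num
      | succ s ih =>
        intro p'
        rw [hDtsucc]
        exact Finset.sum_nonneg fun p _ => mul_nonneg (ih p) (hK0 _ _ _)
    have hDtm1 : ∀ s x, ∑ y, Dt s (x, y) = (P ^ s) σ0 x := by
      intro s
      induction s with
      | zero =>
        intro x
        simp only [hDtzero, Prod.mk.injEq, pow_zero, Matrix.one_apply]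
        by_cases hx : x = σ0
        · subst hx; simp
        · simp [hx, Ne.symm hx]
      | succ s ih =>
        intro x
        simp only [hDtsucc]
        rw [Finset.sum_comm]
        calc ∑ p : Ω × Ω, ∑ y, Dt s p * K p.1 p.2 (x, y)
            = ∑ p : Ω × Ω, Dt s p * P p.1 x := by
              refine Finset.sum_congr rfl fun p _ => ?_
              rw [← Finset.mul_sum, hK1 p.1 p.2 x]
          _ = ∑ z, (∑ y, Dt s (z, y)) * P z x := by
              rw [Fintype.sum_prod_type]
              exact Finset.sum_congr rfl fun z _ => by rw [Finset.sum_mul]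
          _ = (P ^ (s + 1)) σ0 x := by
              rw [pow_succ, Matrix.mul_apply]
              exact Finset.sum_congr rfl fun z _ => by rw [ih z]
    have hDtm2 : ∀ s y, ∑ x, Dt s (x, y) = (P ^ s) η y := by
      intro s
      induction s with
      | zero =>
        intro y
        simp only [hDtzero, Prod.mk.injEq, pow_zero, Matrix.one_apply]
        by_cases hy : y = η
        · subst hy; simp
        · simp [hy, Ne.symm hy]
      | succ s ih =>
        intro y
        simp only [hDtsucc]
        rw [Finset.sum_comm]
        calc ∑ p : Ω × Ω, ∑ x, Dt s p * K p.1 p.2 (x, y)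
            = ∑ p : Ω × Ω, Dt s p * P p.2 y := by
              refine Finset.sum_congr rfl fun p _ => ?_
              rw [← Finset.mul_sum, hK2 p.1 p.2 y]
          _ = ∑ z, (∑ x, Dt s (x, z)) * P z y := by
              rw [Fintype.sum_prod_type_right]
              exact Finset.sum_congr rfl fun z _ => by rw [Finset.sum_mul]
          _ = (P ^ (s + 1)) η y := by
              rw [pow_succ, Matrix.mul_apply]
              exact Finset.sum_congr rfl fun z _ => by rw [ih z]
    have hDtc : ∀ s, ∑ p : Ω × Ω, Dt s p * (Φ p.1 p.2 : ℝ) ≤ β' ^ s * (Φ σ0 η : ℝ) := by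
      intro s
      induction s with
      | zero =>
        rw [pow_zero, one_mul]
        refine le_of_eq ?_
        calc ∑ p : Ω × Ω, Dt 0 p * (Φ p.1 p.2 : ℝ)
            = ∑ p : Ω × Ω, (if p = (σ0, η) then (Φ p.1 p.2 : ℝ) else 0) :=
              Finset.sum_congr rfl fun p _ => by rw [hDtzero]; split <;> simp
          _ = (Φ σ0 η : ℝ) := by
              rw [Finset.sum_ite_eq' univ ((σ0, η) : Ω × Ω) (fun p => (Φ p.1 p.2 : ℝ))]
              simp
      | succ s ih =>
        calc ∑ p' : Ω × Ω, Dt (s + 1) p' * (Φ p'.1 p'.2 : ℝ)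
            = ∑ p : Ω × Ω, Dt s p * ∑ p' : Ω × Ω, K p.1 p.2 p' * (Φ p'.1 p'.2 : ℝ) := by
              simp only [hDtsucc, Finset.sum_mul]
              rw [Finset.sum_comm]
              refine Finset.sum_congr rfl fun p _ => ?_
              rw [Finset.mul_sum]
              exact Finset.sum_congr rfl fun p' _ => by ring
          _ ≤ ∑ p : Ω × Ω, Dt s p * (β' * (Φ p.1 p.2 : ℝ)) := by
              refine Finset.sum_le_sum fun p _ => ?_
              exact mul_le_mul_of_nonneg_left (hKc p.1 p.2) (hDt0 s p)
          _ = β' * ∑ p : Ω × Ω, Dt s p * (Φ p.1 p.2 : ℝ) := by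
              rw [Finset.mul_sum]
              exact Finset.sum_congr rfl fun p _ => by ring
          _ ≤ β' * (β' ^ s * (Φ σ0 η : ℝ)) := mul_le_mul_of_nonneg_left ih hβ'0
          _ = β' ^ (s + 1) * (Φ σ0 η : ℝ) := by ring
    -- TV bound from coupling
    have split : ∀ (f : Ω → ℝ) (x : Ω),
        ∑ y, f y = f x + ∑ y, (if y = x then 0 else f y) := by
      intro f x
      have : ∀ y, f y = (if y = x then f y else 0) + (if y = x then 0 else f y) := by
        intro y; by_cases h : y = x <;> simp [h]
      calc ∑ y, f y = ∑ y, ((if y = x then f y else 0) + (if y = x then 0 else f y)) :=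
            Finset.sum_congr rfl fun y _ => this y
        _ = f x + ∑ y, (if y = x then 0 else f y) := by
            rw [Finset.sum_add_distrib, Finset.sum_ite_eq' univ x f]
            simp
    have habs : ∀ x, |(P ^ t) σ0 x - (P ^ t) η x| ≤
        (∑ y, if y = x then 0 else Dt t (x, y)) +
        (∑ y, if y = x then 0 else Dt t (y, x)) := by
      intro x
      rw [← hDtm1 t x, ← hDtm2 t x, split (fun y => Dt t (x, y)) x,
        split (fun y => Dt t (y, x)) x]
      have h1 : (0:ℝ) ≤ ∑ y, if y = x then 0 else Dt t (x, y) :=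
        Finset.sum_nonneg fun y _ => by split <;> [rfl; exact hDt0 t _]
      have h2 : (0:ℝ) ≤ ∑ y, if y = x then 0 else Dt t (y, x) :=
        Finset.sum_nonneg fun y _ => by split <;> [rfl; exact hDt0 t _]
      rw [add_sub_add_left_eq_sub]
      calc |(∑ y, if y = x then 0 else Dt t (x, y)) -
             (∑ y, if y = x then 0 else Dt t (y, x))|
          ≤ |∑ y, if y = x then 0 else Dt t (x, y)| +
            |∑ y, if y = x then 0 else Dt t (y, x)| := abs_sub _ _
        _ = _ := by rw [abs_of_nonneg h1, abs_of_nonneg h2]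
    have hOffS : (∑ x, ∑ y, if y = x then 0 else Dt t (x, y)) =
        ∑ p : Ω × Ω, (if p.1 = p.2 then 0 else Dt t p) := by
      rw [Fintype.sum_prod_type]
      refine Finset.sum_congr rfl fun x _ => Finset.sum_congr rfl fun y _ => ?_
      by_cases h : x = y
      · simp [h]
      · simp [h, Ne.symm h]
    have hOffS' : (∑ x, ∑ y, if y = x then 0 else Dt t (y, x)) =
        ∑ p : Ω × Ω, (if p.1 = p.2 then 0 else Dt t p) := by
      rw [Finset.sum_comm, Fintype.sum_prod_type]
    have hOffle : (∑ p : Ω × Ω, (if p.1 = p.2 then 0 else Dt t p)) ≤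
        ∑ p : Ω × Ω, Dt t p * (Φ p.1 p.2 : ℝ) := by
      refine Finset.sum_le_sum fun p _ => ?_
      by_cases h : p.1 = p.2
      · simp only [if_pos h]
        exact mul_nonneg (hDt0 t p) (Nat.cast_nonneg _)
      · simp only [if_neg h]
        have hΦ1 : (1:ℝ) ≤ (Φ p.1 p.2 : ℝ) := by
          have : Φ p.1 p.2 ≠ 0 := fun hc => h ((hzero p.1 p.2).mp hc)
          exact_mod_cast Nat.one_le_iff_ne_zero.mpr this
        calc Dt t p = Dt t p * 1 := (mul_one _).symm
          _ ≤ Dt t p * (Φ p.1 p.2 : ℝ) :=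
            mul_le_mul_of_nonneg_left hΦ1 (hDt0 t p)
    calc (1 / 2) * ∑ x, |(P ^ t) σ0 x - (P ^ t) η x|
        ≤ (1 / 2) * ∑ x, ((∑ y, if y = x then 0 else Dt t (x, y)) +
            (∑ y, if y = x then 0 else Dt t (y, x))) := by
          refine mul_le_mul_of_nonneg_left (Finset.sum_le_sum fun x _ => habs x) (by norm_num)
      _ = ∑ p : Ω × Ω, (if p.1 = p.2 then 0 else Dt t p) := by
          rw [Finset.sum_add_distrib, hOffS, hOffS']
          ring
      _ ≤ ∑ p : Ω × Ω, Dt t p * (Φ p.1 p.2 : ℝ) := hOffle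
      _ ≤ β' ^ t * (Φ σ0 η : ℝ) := hDtc t
  -- stationarity of π for powers of P
  have hπstat : ∀ s x, ∑ η, π η * (P ^ s) η x = π x := by
    intro s
    induction s with
    | zero =>
      intro x
      simp only [pow_zero, Matrix.one_apply, mul_ite, mul_one, mul_zero]
      rw [Finset.sum_ite_eq' univ x π]
      simp
    | succ s ih =>
      intro x
      calc ∑ η, π η * (P ^ (s + 1)) η x
          = ∑ η, π η * ∑ z, (P ^ s) η z * P z x := by
            refine Finset.sum_congr rfl fun η _ => ?_
            rw [pow_succ, Matrix.mul_apply]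
        _ = ∑ z, (∑ η, π η * (P ^ s) η z) * P z x := by
            simp only [Finset.mul_sum]
            rw [Finset.sum_comm]
            refine Finset.sum_congr rfl fun z _ => ?_
            rw [Finset.sum_mul]
            exact Finset.sum_congr rfl fun η _ => by ring
        _ = ∑ z, π z * P z x := Finset.sum_congr rfl fun z _ => by rw [ih z]
        _ = π x := hstat x
  -- assemble the mixing bound
  have hmix : (1 / 2) * ∑ x, |(P ^ t) σ0 x - π x| ≤ β' ^ t * (D : ℝ) := by
    have hrw : ∀ x, (P ^ t) σ0 x - π x = ∑ η, π η * ((P ^ t) σ0 x - (P ^ t) η x) := by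
      intro x
      rw [Finset.sum_congr rfl fun η (_ : η ∈ univ) => mul_sub (π η) _ _,
        Finset.sum_sub_distrib, ← Finset.sum_mul, hπ1, one_mul, hπstat t x]
    calc (1 / 2) * ∑ x, |(P ^ t) σ0 x - π x|
        ≤ (1 / 2) * ∑ x, ∑ η, π η * |(P ^ t) σ0 x - (P ^ t) η x| := by
          refine mul_le_mul_of_nonneg_left (Finset.sum_le_sum fun x _ => ?_) (by norm_num)
          rw [hrw x]
          refine (Finset.abs_sum_le_sum_abs _ _).trans ?_
          refine Finset.sum_le_sum fun η _ => ?_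
          rw [abs_mul, abs_of_nonneg (hπ0 η)]
      _ = ∑ η, π η * ((1 / 2) * ∑ x, |(P ^ t) σ0 x - (P ^ t) η x|) := by
          rw [Finset.sum_comm, Finset.mul_sum]
          refine Finset.sum_congr rfl fun η _ => ?_
          rw [← Finset.mul_sum]
          ring
      _ ≤ ∑ η, π η * (β' ^ t * (D : ℝ)) := by
          refine Finset.sum_le_sum fun η _ => mul_le_mul_of_nonneg_left ?_ (hπ0 η)
          refine (key η).trans ?_
          exact mul_le_mul_of_nonneg_left (Nat.cast_le.mpr (hD σ0 η)) (pow_nonneg hβ'0 t)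
      _ = β' ^ t * (D : ℝ) := by rw [← Finset.sum_mul, hπ1, one_mul]
  refine hmix.trans ?_
  -- numeric estimate : β'^t * D ≤ ε
  have h1β : (0:ℝ) < 1 - β := by linarith
  rcases Nat.eq_zero_or_pos D with hD0 | hDpos
  · rw [hD0]
    simp
    positivity
  · have hDpos' : (0:ℝ) < (D : ℝ) := by exact_mod_cast hDpos
    rcases eq_or_lt_of_le hβ'0 with hb0 | hbpos
    · cases t with
      | zero =>
        rw [pow_zero, one_mul]
        have hlog : Real.log ((D:ℝ) * ε⁻¹) ≤ 0 := by
          have := (div_le_iff₀ h1β).mp ht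
          simpa using this
        have hx : (0:ℝ) < (D:ℝ) * ε⁻¹ := mul_pos hDpos' (inv_pos.mpr hε)
        have hle1 : (D:ℝ) * ε⁻¹ ≤ 1 := by
          by_contra hcon
          push_neg at hcon
          exact absurd (Real.log_pos hcon) (not_lt.mpr hlog)
        calc (D:ℝ) = ((D:ℝ) * ε⁻¹) * ε := by field_simp
          _ ≤ 1 * ε := mul_le_mul_of_nonneg_right hle1 hε.le
          _ = ε := one_mul ε
      | succ s =>
        rw [← hb0]
        rw [zero_pow (Nat.succ_ne_zero s), zero_mul]
        exact hε.le
    · have hββ' : β' = β := by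
        rcases le_or_gt β 0 with h | h
        · exfalso
          have : β' = 0 := max_eq_right h
          rw [this] at hbpos
          exact lt_irrefl 0 hbpos
        · exact max_eq_left h.le
      have hβpos : 0 < β := by rw [← hββ']; exact hbpos
      have hL : Real.log ((D:ℝ) * ε⁻¹) ≤ (t:ℝ) * (1 - β) := by
        have := (div_le_iff₀ h1β).mp ht
        linarith
      have hlogβ : Real.log β ≤ β - 1 := Real.log_le_sub_one_of_pos hβpos
      have hgoalpos : (0:ℝ) < β' ^ t * (D : ℝ) := mul_pos (pow_pos hbpos t) hDpos'
      rw [← Real.exp_log hgoalpos, ← Real.exp_log hε]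
      apply Real.exp_le_exp.mpr
      rw [Real.log_mul (ne_of_gt (pow_pos hbpos t)) (ne_of_gt hDpos'), Real.log_pow, hββ']
      have hlogsplit : Real.log ((D:ℝ) * ε⁻¹) = Real.log (D:ℝ) - Real.log ε := by
        rw [Real.log_mul (ne_of_gt hDpos') (ne_of_gt (inv_pos.mpr hε)), Real.log_inv]
        ring
      rw [hlogsplit] at hL
      have h2 : (t:ℝ) * (1 - β) ≤ (t:ℝ) * (-Real.log β) := by
        refine mul_le_mul_of_nonneg_left ?_ (Nat.cast_nonneg t)
        linarith
      push_cast
      linarith
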